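/- Let n ≥ 2, let A be the free associative unital ℂ-algebra on generators x¹, …, xⁿ, let C be the two-sided ideal of A generated by x¹, and let Q = A/C, which is isomorphic to the free associative unital ℂ-algebra on x², …, xⁿ. Then the canonical Lie algebra homomorphism π : G_C → Der(Q) (where G_C = {X ∈ Der(A) : X(C) ⊆ C} and π(X)(p(a)) = p(X(a)) for the quotient map p : A → Q) is surjective; that is, every derivation of Q lifts to a derivation of A preserving C, so Q is a submanifold algebra of A. -/

import Mathlib

/-- A ℂ-linear map `X : A → A` is a derivation if it satisfies the Leibniz rule. -/
def IsDerivation {A : Type*} [Ring A] [Algebra ℂ A] (X : A →ₗ[ℂ] A) : Prop :=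
  ∀ a b : A, X (a * b) = X a * b + a * X b

theorem stmt_16 (n : ℕ) (hn : 2 ≤ n) (Q : Type*) [Ring Q] [Algebra ℂ Q]
    -- C is the two-sided ideal of the free algebra A = ℂ⟨x¹, …, xⁿ⟩ generated by x¹
    (C : TwoSidedIdeal (FreeAlgebra ℂ (Fin n)))
    (hC : C = TwoSidedIdeal.span {FreeAlgebra.ι ℂ (⟨0, by omega⟩ : Fin n)})
    -- `Q = A/C` with quotient map `p`
    (p : FreeAlgebra ℂ (Fin n) →ₐ[ℂ] Q) (hp : Function.Surjective p)
    (hker : ∀ a : FreeAlgebra ℂ (Fin n), p a = 0 ↔ a ∈ C) :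
    -- π : G_C → Der(Q) is surjective: every derivation of Q lifts to a derivation
    -- of A preserving C, so Q is a submanifold algebra of A
    ∀ D : Q →ₗ[ℂ] Q, IsDerivation D →
      ∃ X : FreeAlgebra ℂ (Fin n) →ₗ[ℂ] FreeAlgebra ℂ (Fin n),
        IsDerivation X ∧ (∀ c ∈ C, X c ∈ C) ∧
        ∀ a : FreeAlgebra ℂ (Fin n), p (X a) = D (p a) := by
  intro D hD
  set A := FreeAlgebra ℂ (Fin n)
  -- values on generators: lift D (p (ι i)) along p
  set f : Fin n → A := fun i => Function.surjInv hp (D (p (FreeAlgebra.ι ℂ i))) with hf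
  have hpf : ∀ i, p (f i) = D (p (FreeAlgebra.ι ℂ i)) := fun i =>
    Function.surjInv_eq hp _
  -- algebra map into the trivial square-zero extension
  set Φ : A →ₐ[ℂ] TrivSqZeroExt A A :=
    FreeAlgebra.lift ℂ (fun i => (⟨FreeAlgebra.ι ℂ i, f i⟩ : TrivSqZeroExt A A)) with hΦ
  have hΦι : ∀ i, Φ (FreeAlgebra.ι ℂ i) = (⟨FreeAlgebra.ι ℂ i, f i⟩ : TrivSqZeroExt A A) := by
    intro i
    rw [hΦ]
    exact FreeAlgebra.lift_ι_apply _ _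
  -- the first component of Φ is the identity
  have hfst : ∀ a : A, (Φ a).fst = a := by
    have h : (TrivSqZeroExt.fstHom ℂ A A).comp Φ = AlgHom.id ℂ A := by
      apply FreeAlgebra.hom_ext
      funext i
      simp [hΦι i]
      rfl
    intro a
    calc (Φ a).fst = ((TrivSqZeroExt.fstHom ℂ A A).comp Φ) a := rfl
    _ = a := by rw [h]; rfl
  set X : A →ₗ[ℂ] A :=
    (LinearMap.restrictScalars ℂ (TrivSqZeroExt.sndHom A A)).comp Φ.toLinearMap with hX
  have hXapp : ∀ a : A, X a = (Φ a).snd := fun a => rfl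
  have hXder : IsDerivation X := by
    intro a b
    rw [hXapp, hXapp, hXapp]
    have h : Φ (a * b) = Φ a * Φ b := map_mul Φ a b
    rw [h, TrivSqZeroExt.snd_mul]
    simp only [hfst, smul_eq_mul, MulOpposite.smul_eq_mul_unop, MulOpposite.unop_op]
    exact add_comm _ _
  -- derivations kill 1 and scalars
  have hX1 : X 1 = 0 := by
    have := hXder 1 1
    simp at this
    exact this
  have hD1 : D 1 = 0 := by
    have := hD 1 1
    simp at this
    exact this
  -- the key commuting identity
  have hcomm : ∀ a : A, p (X a) = D (p a) := by
    intro a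
    induction a using FreeAlgebra.induction with
    | grade0 c =>
      have h1 : (algebraMap ℂ A) c = c • (1 : A) := by
        rw [Algebra.smul_def, mul_one]
      have h2 : (algebraMap ℂ Q) c = c • (1 : Q) := by
        rw [Algebra.smul_def, mul_one]
      simp [show (algebraMap ℂ (FreeAlgebra ℂ (Fin n))) c = c • (1 : A) from h1, h2, map_smul, hX1, hD1]
    | grade1 i =>
      rw [hXapp, hΦι i]
      exact hpf i
    | mul a b ha hb =>
      rw [hXder a b, map_add, map_mul, map_mul, map_mul, hD (p a) (p b), ha, hb]
    | add a b ha hb =>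
      rw [map_add, map_add, map_add, map_add, ha, hb]
  refine ⟨X, hXder, ?_, hcomm⟩
  intro c hc
  rw [← hker] at hc ⊢
  rw [hcomm c, hc, map_zero]
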